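/- Let (Q, m) be a Noetherian local ring and J ⊆ Q an ideal generated by a regular sequence g_1, ..., g_m on Q. If f ∈ J and f ∉ mJ, then there exist h_2, ..., h_m ∈ J such that J = (f, h_2, ..., h_m) and f, h_2, ..., h_m is a regular sequence on Q. -/

import Mathlib

open IsLocalRing

/-- **Exchange lemma for regular sequences.** Let `(Q, 𝔪)` be a Noetherian local ring and
`J ⊆ Q` an ideal generated by a `Q`-regular sequence `g_1, …, g_m`.  If `f ∈ J` and
`f ∉ 𝔪J`, then there are `h_2, …, h_m ∈ J` with `J = (f, h_2, …, h_m)` such that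
`f, h_2, …, h_m` is a `Q`-regular sequence. -/
theorem stmt4 (Q : Type*) [CommRing Q] [IsLocalRing Q] [IsNoetherianRing Q]
    (m : ℕ) (g : Fin m → Q) (J : Ideal Q)
    (hJ : J = Ideal.span (Set.range g))
    (hreg : RingTheory.Sequence.IsRegular Q (List.ofFn g))
    (f : Q) (hfJ : f ∈ J) (hfmJ : f ∉ maximalIdeal Q * J) :
    ∃ h : Fin (m - 1) → Q,
      (∀ i, h i ∈ J) ∧
      Ideal.span (insert f (Set.range h)) = J ∧
      RingTheory.Sequence.IsRegular Q (f :: List.ofFn h) := by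
  -- dispose of the case `m = 0`
  rcases m with _ | n
  · exfalso
    apply hfmJ
    have : J = ⊥ := by
      simp [hJ, Set.range_eq_empty]
    rw [this] at hfJ ⊢
    simpa using hfJ
  -- write `f = ∑ c i * g i`
  have hg : ∀ i, g i ∈ J := fun i => hJ ▸ Ideal.subset_span ⟨i, rfl⟩
  obtain ⟨c, hc⟩ : ∃ c : Fin (n + 1) → Q, (∑ i, c i • g i) = f := by
    rw [hJ] at hfJ
    exact (Finsupp.mem_ideal_span_range_iff_exists_finsupp.mp hfJ).elim
      fun c hcf => ⟨c, by simpa [Finsupp.sum_fintype] using hcf⟩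
  -- some coefficient is a unit
  obtain ⟨i, hi⟩ : ∃ i, IsUnit (c i) := by
    by_contra hno
    push_neg at hno
    apply hfmJ
    rw [← hc]
    refine Ideal.sum_mem _ fun i _ => ?_
    exact Ideal.mul_mem_mul ((mem_maximalIdeal _).mpr (hno i)) (hg i)
  -- `h` is `g` with the `i`-th entry removed
  set h : Fin n → Q := g ∘ i.succAbove with hh
  have hhJ : ∀ j, h j ∈ J := fun j => hg _
  -- the element z
  set z : Q := ∑ j : Fin n, c (i.succAbove j) • g (i.succAbove j) with hz
  have hfz : f = c i * g i + z := by
    rw [← hc, Fin.sum_univ_succAbove _ i]; rfl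
  have hzmem : z ∈ Ideal.span (Set.range h) := by
    refine Ideal.sum_mem _ fun j _ => Ideal.mul_mem_left _ _ ?_
    exact Ideal.subset_span ⟨j, rfl⟩
  -- span equality
  have hspan : Ideal.span (insert f (Set.range h)) = J := by
    apply le_antisymm
    · rw [Ideal.span_le]
      rintro x (rfl | ⟨j, rfl⟩)
      · exact hfJ
      · exact hhJ j
    · rw [hJ, Ideal.span_le]
      rintro x ⟨k, rfl⟩
      rcases eq_or_ne k i with rfl | hki
      · have h1 : f ∈ Ideal.span (insert f (Set.range h)) :=
          Ideal.subset_span (Set.mem_insert _ _)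
        have h2 : z ∈ Ideal.span (insert f (Set.range h)) :=
          Ideal.span_mono (Set.subset_insert _ _) hzmem
        have h3 : c k * g k ∈ Ideal.span (insert f (Set.range h)) := by
          have heq : c k * g k = f - z := by rw [hfz]; ring
          rw [heq]
          exact Ideal.sub_mem _ h1 h2
        have := Ideal.mul_mem_left _ (↑hi.unit⁻¹) h3
        rwa [← mul_assoc, IsUnit.val_inv_mul, one_mul] at this
      · obtain ⟨j, hj⟩ := Fin.exists_succAbove_eq hki
        exact Ideal.subset_span (Set.mem_insert_iff.mpr
          (Or.inr ⟨j, by rw [hh, Function.comp_apply, hj]⟩))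
  refine ⟨h, hhJ, hspan, ?_⟩
  -- ideals of lists
  have hofh : Ideal.ofList (List.ofFn h) = Ideal.span (Set.range h) := by
    unfold Ideal.ofList
    congr 1
    ext x
    exact List.mem_ofFn
  -- `List.ofFn g` is a permutation of `List.ofFn h ++ [g i]`
  have hperm1 : (List.ofFn g).Perm (g i :: List.ofFn h) := by
    have hfun : g ∘ ⇑(i.cycleRange⁻¹) = Fin.cons (g i) h := by
      funext k
      refine Fin.cases ?_ (fun j => ?_) k
      · simp only [Function.comp_apply, Fin.cons_zero]
        rw [show (i.cycleRange⁻¹ : Equiv.Perm (Fin (n+1))) 0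
            = i.cycleRange.symm 0 from rfl, Fin.cycleRange_symm_zero]
      · simp only [Function.comp_apply, Fin.cons_succ]
        rw [show (i.cycleRange⁻¹ : Equiv.Perm (Fin (n+1))) j.succ
            = i.cycleRange.symm j.succ from rfl, Fin.cycleRange_symm_succ]
        rfl
    have := Equiv.Perm.ofFn_comp_perm (i.cycleRange⁻¹) g
    rw [hfun] at this
    refine this.symm.trans ?_
    rw [List.ofFn_succ]
    simp
  have hperm2 : (g i :: List.ofFn h).Perm (List.ofFn h ++ [g i]) := by
    simpa using List.perm_append_comm (l₁ := [g i]) (l₂ := List.ofFn h)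
  -- regular sequence `h ++ [g i]`
  have hreg2 : RingTheory.Sequence.IsRegular Q (List.ofFn h ++ [g i]) :=
    IsLocalRing.isRegular_of_perm hreg (hperm1.trans hperm2)
  -- replace `g i` by `f`: same smul action on the quotient
  have hreg3 : RingTheory.Sequence.IsRegular Q (List.ofFn h ++ [f]) := by
    obtain ⟨hw, -⟩ := hreg2
    rw [RingTheory.Sequence.isWeaklyRegular_append_iff] at hw
    obtain ⟨hw1, hw2⟩ := hw
    rw [RingTheory.Sequence.isWeaklyRegular_singleton_iff] at hw2
    constructor
    · rw [RingTheory.Sequence.isWeaklyRegular_append_iff]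
      refine ⟨hw1, ?_⟩
      rw [RingTheory.Sequence.isWeaklyRegular_singleton_iff]
      -- `f` and `c i * g i` act the same on the quotient
      have hsame : ∀ x : Q ⧸ (Ideal.ofList (List.ofFn h) • ⊤ : Submodule Q Q),
          f • x = (c i * g i) • x := by
        intro x
        obtain ⟨y, rfl⟩ := Submodule.Quotient.mk_surjective _ x
        rw [← Submodule.Quotient.mk_smul, ← Submodule.Quotient.mk_smul,
          Submodule.Quotient.eq]
        have : f • y - (c i * g i) • y = z • y := by
          rw [hfz]; ring_nf
        rw [this]
        exact Submodule.smul_mem_smul (hofh ▸ hzmem) trivial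
      have hreg_cg : IsSMulRegular
          (Q ⧸ (Ideal.ofList (List.ofFn h) • ⊤ : Submodule Q Q)) (c i * g i) :=
        (hi.isSMulRegular _).mul hw2
      intro a b hab
      apply hreg_cg
      show (c i * g i) • a = (c i * g i) • b
      rw [← hsame a, ← hsame b]
      exact hab
    · -- the generated ideal is unchanged
      have : Ideal.ofList (List.ofFn h ++ [f]) = Ideal.ofList (List.ofFn g) := by
        have hofg : Ideal.ofList (List.ofFn g) = Ideal.span (Set.range g) := by
          unfold Ideal.ofList
          congr 1
          ext x
          exact List.mem_ofFn
        rw [Ideal.ofList_append, hofh, Ideal.ofList_singleton, hofg, ← hJ,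
          ← hspan, Ideal.span_insert, sup_comm]
      rw [this]
      exact hreg.top_ne_smul
  -- permute `f` to the front
  exact IsLocalRing.isRegular_of_perm hreg3
    ((List.perm_append_comm (l₁ := List.ofFn h) (l₂ := [f])).trans (by simp))
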